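/- For each k ∈ ℕ, the set L_k = { w ∈ Σ* : the normal form of w equals x̄ · shuffle(y, ȳ) · z with |y| = k } (i.e., words of overlap width exactly k) is not a regular language. Consequently, { q ∈ Q : ow(q) = k } is not recognizable. -/

import Mathlib

/-- A basic queue action: write a letter or read a letter. -/
inductive Act (A : Type) : Type
  | wr (a : A)
  | rd (a : A)
deriving DecidableEq

variable {A : Type} [DecidableEq A]

/-- The action of words over `Act A` on queue states `A* ∪ {⊥}` (⊥ = `none`). -/
def act : Option (List A) → List (Act A) → Option (List A)
  | q, [] => q
  | none, _ :: _ => none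
  | some q, (Act.wr a) :: u => act (some (q ++ [a])) u
  | some q, (Act.rd a) :: u =>
    match q with
    | [] => none
    | b :: q' => if b = a then act (some q') u else none

/-- Two words over `Act A` are equivalent if they act identically on all queues. -/
def qequiv (u v : List (Act A)) : Prop := ∀ q : List A, act (some q) u = act (some q) v

/-- Writing the word `w`. -/
def W (w : List A) : List (Act A) := w.map Act.wr

/-- Reading the word `w` (the barred copy of `w`). -/
def R (w : List A) : List (Act A) := w.map Act.rd

/-- `shuffle s` is the word `s₁ s̄₁ s₂ s̄₂ … sₖ s̄ₖ`. -/
def shuffle (s : List A) : List (Act A) := s.flatMap fun a => [Act.wr a, Act.rd a]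

/-- The projection to write letters. -/
def prW (w : List (Act A)) : List A :=
  w.filterMap fun x => match x with | Act.wr a => some a | Act.rd _ => none

/-- The projection to read letters (with the bars removed). -/
def prR (w : List (Act A)) : List A :=
  w.filterMap fun x => match x with | Act.wr _ => none | Act.rd a => some a

theorem act_append (u v : List (Act A)) : ∀ q, act q (u ++ v) = act (act q u) v := by
  induction u with
  | nil =>
      intro q
      cases q <;> rfl
  | cons x u ih =>
      intro q
      cases q with
      | none =>
          simp only [List.cons_append, act]
          cases v with
          | nil => rfl
          | cons _ _ => rfl
      | some q =>
          cases x with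
          | wr a => simpa [act] using ih _
          | rd a =>
              cases q with
              | nil =>
                  simp only [List.cons_append, act]
                  cases v with
                  | nil => rfl
                  | cons _ _ => rfl
              | cons b q' =>
                  by_cases h : b = a
                  · simp [List.cons_append, act, h, ih]
                  · simp only [List.cons_append, act, if_neg h]
                    cases v with
                    | nil => rfl
                    | cons _ _ => rfl

/-- The setoid of queue-action equivalence. -/
def qsetoid (A : Type) [DecidableEq A] : Setoid (List (Act A)) :=
  ⟨qequiv, ⟨fun _ _ => rfl, fun h q => (h q).symm, fun h1 h2 q => (h1 q).trans (h2 q)⟩⟩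

/-- The monoid of queue actions. -/
def QAct (A : Type) [DecidableEq A] : Type := Quotient (qsetoid A)

theorem act_none : ∀ v : List (Act A), act (none : Option (List A)) v = none
  | [] => rfl
  | _ :: _ => rfl

theorem qequiv_append {u u' v v' : List (Act A)} (hu : qequiv u u') (hv : qequiv v v') :
    qequiv (u ++ v) (u' ++ v') := by
  intro q
  rw [act_append, act_append, hu q]
  cases h : act (some q) u' with
  | none => rw [act_none, act_none]
  | some q' => exact hv q'

instance : Monoid (QAct A) where
  mul := Quotient.map₂ (· ++ ·) (fun _ _ hu _ _ hv => qequiv_append hu hv)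
  one := Quotient.mk (qsetoid A) []
  mul_assoc := by
    rintro ⟨u⟩ ⟨v⟩ ⟨w⟩
    exact congrArg (Quotient.mk (qsetoid A)) (List.append_assoc u v w)
  one_mul := by
    rintro ⟨u⟩
    rfl
  mul_one := by
    rintro ⟨u⟩
    exact congrArg (Quotient.mk (qsetoid A)) (List.append_nil u)

/-- The class of a word in the monoid of queue actions. -/
def cls (w : List (Act A)) : QAct A := Quotient.mk (qsetoid A) w

theorem cls_mul (u v : List (Act A)) : cls u * cls v = cls (u ++ v) := rfl

/-- A subset of the monoid of queue actions is recognizable if it is saturated by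
a morphism to a finite monoid. -/
def Recognizable (S : Set (QAct A)) : Prop :=
  ∃ (M : Type) (_ : Fintype M) (_ : Monoid M) (φ : QAct A →* M), φ ⁻¹' (φ '' S) = S

theorem act_W (v : List A) : ∀ q, act (some q) (W v) = some (q ++ v) := by
  induction v with
  | nil => intro q; simp [W, act]
  | cons c v ih => intro q; simp [W, act] at ih ⊢; rw [ih]; simp

theorem act_R (u : List A) : ∀ q, act (some q) (R u) =
    if u <+: q then some (q.drop u.length) else none := by
  induction u with
  | nil => intro q; simp [R, act]
  | cons c u ih =>
      intro q
      cases q with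
      | nil => simp [R, act, List.cons_prefix_cons]
      | cons d q' =>
          simp only [R, List.map_cons, act, List.cons_prefix_cons]
          by_cases h : d = c
          · subst h
            rw [if_pos rfl]
            simp only [R] at ih
            rw [ih]
            simp
          · rw [if_neg h, if_neg (by rintro ⟨h1, -⟩; exact h h1.symm)]

theorem act_shuffle (y : List A) : ∀ q, act (some q) (shuffle y) =
    if y <+: q ++ y then some ((q ++ y).drop y.length) else none := by
  induction y with
  | nil => intro q; simp [shuffle, act]
  | cons c y ih =>
      have hsh : shuffle (c :: y) = Act.wr c :: Act.rd c :: shuffle y := rfl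
      intro q
      cases q with
      | nil =>
          rw [hsh]
          simp only [act, List.nil_append, if_pos rfl]
          rw [if_pos (List.prefix_refl _)]
          have := ih []
          rw [if_pos (by simp)] at this
          simp only [List.nil_append] at this
          rw [this]
          simp
      | cons d q' =>
          rw [hsh]
          simp only [act, List.cons_append, List.cons_prefix_cons]
          by_cases h : d = c
          · subst h
            rw [if_pos rfl]
            rw [ih (q' ++ [d])]
            by_cases h2 : y <+: q' ++ d :: y
            · rw [if_pos (by simpa using h2), if_pos (by exact ⟨rfl, by simpa using h2⟩)]
              simp
            · rw [if_neg (by simpa using h2), if_neg (by rintro ⟨-, h3⟩; exact h2 (by simpa using h3))]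
          · rw [if_neg h, if_neg (by rintro ⟨h1, -⟩; exact h h1.symm)]

theorem act_WR (v u : List A) (q : List A) :
    act (some q) (W v ++ R u) = if u <+: q ++ v then some ((q ++ v).drop u.length) else none := by
  rw [act_append, act_W, act_R]

theorem nonmemb {a b : A} (hab : a ≠ b) {k N : ℕ} (hkN : k < N) (x y z : List A)
    (hy : y.length = k)
    (h : qequiv (W (List.replicate N a ++ b :: List.replicate k a)
                  ++ R (List.replicate N a ++ b :: List.replicate k a))
         (R x ++ shuffle y ++ W z)) : False := by
  set u : List A := List.replicate N a ++ b :: List.replicate k a with hu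
  -- step 1 : x = []
  have h0 := h []
  rw [act_WR, if_pos (by simp)] at h0
  simp only [List.nil_append, List.drop_left] at h0
  rw [act_append, act_append, act_R] at h0
  rcases x with _ | ⟨c, x'⟩
  · rw [if_pos (by simp)] at h0
    simp only [List.drop_nil] at h0
    rw [act_shuffle, if_pos (by simp), act_W] at h0
    simp only [List.nil_append, List.drop_length] at h0
    -- h0 : some [] = some z , so z = []
    have hz : z = [] := by
      simpa using h0.symm
    subst hz
    -- step 2
    have h1 := h (u ++ [b])
    rw [act_WR, if_pos (by rw [List.append_assoc]; exact List.prefix_append _ _)] at h1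
    rw [List.append_assoc, List.drop_left] at h1
    rw [act_append, act_append, act_R, if_pos (by simp)] at h1
    simp only [List.length_nil, List.drop_zero] at h1
    rw [act_shuffle] at h1
    by_cases hc : y <+: (u ++ [b]) ++ y
    · rw [if_pos hc, act_W, List.append_nil, hy] at h1
      have h2 : ([b] ++ u : List A) = List.drop k ((u ++ [b]) ++ y) := by
        simpa using h1
      rw [List.append_assoc, List.drop_append_of_le_length
        (by rw [hu]; simp only [List.length_append, List.length_replicate, List.length_cons]; omega)] at h2
      rw [hu, List.drop_append_of_le_length (by simpa using hkN.le), List.drop_replicate] at h2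
      have hNk : N - k = (N - k - 1) + 1 := by omega
      rw [hNk, List.replicate_succ] at h2
      simp only [List.singleton_append, List.cons_append, List.cons.injEq] at h2
      exact hab h2.1.symm
    · rw [if_neg hc] at h1
      simp [act, act_none] at h1
  · rw [if_neg (by simp)] at h0
    simp [act_none] at h0

theorem memb {a b : A} (hab : a ≠ b) {k N M : ℕ} (hkN : k < N) (hNM : N < M) :
    qequiv
      (W (List.replicate M a ++ b :: List.replicate k a)
        ++ R (List.replicate N a ++ b :: List.replicate k a))
      (R (List.replicate N a ++ [b]) ++ shuffle (List.replicate k a)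
        ++ W (List.replicate (M - k) a ++ b :: List.replicate k a)) := by
  intro q
  set P : List A := List.replicate N a ++ [b] with hP
  set v : List A := List.replicate M a ++ b :: List.replicate k a with hv
  have hu : (List.replicate N a ++ b :: List.replicate k a : List A)
      = P ++ List.replicate k a := by simp [hP]
  have hlenP : P.length = N + 1 := by simp [hP]
  rw [act_WR, act_append, act_append, act_R, hu]
  by_cases hPq : P <+: q
  · obtain ⟨r, rfl⟩ := hPq
    rw [if_pos (List.prefix_append _ _), List.drop_left, act_shuffle, List.length_replicate]
    -- the two prefix conditions are equivalent
    have htake : (r ++ v).take k = (r ++ List.replicate k a).take k := by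
      simp only [hv, List.take_append, List.take_replicate, List.length_replicate]
      rw [show k - r.length - M = 0 by omega]
      simp only [List.take_zero, List.append_nil]
      congr 2
      omega
    have hcond : (P ++ List.replicate k a <+: (P ++ r) ++ v)
        ↔ List.replicate k a <+: r ++ List.replicate k a := by
      rw [List.append_assoc P r v, List.prefix_append_right_inj]
      rw [List.prefix_iff_eq_take, List.prefix_iff_eq_take, List.length_replicate, htake]
    by_cases hsc : List.replicate k a <+: r ++ List.replicate k a
    · rw [if_pos (hcond.mpr hsc), if_pos hsc, act_W]
      rw [show (P ++ List.replicate k a).length = P.length + k by simp, List.append_assoc,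
        List.drop_length_add_append]
      congr 1
      simp only [hv, List.drop_append, List.drop_replicate, List.length_replicate]
      rw [show k - r.length - M = 0 by omega]
      simp only [List.drop_zero, List.append_assoc]
      rw [← List.append_assoc (List.replicate (k - (k - r.length)) a), ← List.replicate_add]
      congr 3
      omega
    · rw [if_neg (fun hc => hsc (hcond.mp hc)), if_neg hsc, act_none]
  · rw [if_neg hPq, act_none, act_none]
    rw [if_neg ?_]
    intro hcon
    by_cases hq : N + 1 ≤ q.length
    · refine hPq ?_
      have h1 : P <+: q ++ v := (List.prefix_append P _).trans
        (by rw [List.append_assoc] at hcon ⊢; exact hcon)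
      rw [List.prefix_iff_eq_take] at h1 ⊢
      rwa [List.take_append_of_le_length (by omega)] at h1
    · -- q.length ≤ N
      rw [List.prefix_iff_eq_take, List.take_append,
        List.take_of_length_le (by simp [hlenP]; omega)] at hcon
      have e2 := congrArg (fun l : List A => l.drop q.length) hcon
      simp only [List.drop_append, List.drop_length, List.drop_zero,
        List.nil_append, Nat.sub_self] at e2
      rw [hP, List.drop_append_of_le_length (by simp; omega), List.drop_replicate,
        show q.length - (List.replicate N a ++ [b]).length = 0 by simp; omega,
        List.drop_zero] at e2
      have e3 := congrArg (fun l : List A => l.take (N - q.length + 1)) e2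
      rw [List.take_append_of_le_length (by simp),
        List.take_of_length_le (by simp), List.take_take,
        show (N - q.length + 1) ⊓ ((P ++ List.replicate k a).length - q.length)
          = N - q.length + 1 by simp [hlenP]; omega] at e3
      have hb : b ∈ List.take (N - q.length + 1) v := by
        rw [← e3]; simp
      rw [hv, List.take_append_of_le_length (by simp; omega), List.take_replicate] at hb
      exact hab (List.eq_of_mem_replicate hb).symm

/-- For each `k`, the language of words of overlap width exactly `k` is not regular, and
the set of queue actions of overlap width exactly `k` is not recognizable. -/
theorem stmt18 [Fintype A] [Nontrivial A] (k : ℕ) :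
    (¬ ∃ (σ : Type) (_ : Fintype σ) (M : DFA (Act A) σ),
        ∀ w : List (Act A), w ∈ M.accepts ↔
          ∃ x y z : List A, y.length = k ∧ qequiv w (R x ++ shuffle y ++ W z)) ∧
    ¬ Recognizable
        { q : QAct A | ∃ x y z : List A, y.length = k ∧ q = cls (R x ++ shuffle y ++ W z) } := by
  obtain ⟨a, b, hab⟩ := exists_pair_ne A
  -- the word of overlap width min(N,M')+stuff
  set word : ℕ → ℕ → List (Act A) := fun N M' =>
    W (List.replicate M' a ++ b :: List.replicate k a)
      ++ R (List.replicate N a ++ b :: List.replicate k a) with hword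
  have hsplit : ∀ N M', word N M' = W (List.replicate M' a)
      ++ (W (b :: List.replicate k a) ++ R (List.replicate N a ++ b :: List.replicate k a)) := by
    intro N M'
    simp [hword, W, List.map_append]
  have hin : ∀ N M', k < N → N < M' → ∃ x y z : List A, y.length = k ∧
      qequiv (word N M') (R x ++ shuffle y ++ W z) := by
    intro N M' h1 h2
    exact ⟨List.replicate N a ++ [b], List.replicate k a,
      List.replicate (M' - k) a ++ b :: List.replicate k a, by simp, memb hab h1 h2⟩
  have hout : ∀ N, k < N → ¬ ∃ x y z : List A, y.length = k ∧
      qequiv (word N N) (R x ++ shuffle y ++ W z) := by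
    rintro N h1 ⟨x, y, z, hy, hq⟩
    exact nonmemb hab h1 x y z hy hq
  constructor
  · rintro ⟨σ, _, M, hM⟩
    have main : ∀ n n' : ℕ, n < n' →
        M.evalFrom M.start (W (List.replicate (k + 1 + n) a)) =
          M.evalFrom M.start (W (List.replicate (k + 1 + n') a)) → False := by
      intro n n' hlt hst
      set N := k + 1 + n
      set N' := k + 1 + n'
      have hacc : word N N ∈ M.accepts ↔ word N N' ∈ M.accepts := by
        rw [hsplit N N, hsplit N N']
        rw [DFA.mem_accepts, DFA.mem_accepts]
        unfold DFA.eval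
        simp only [DFA.evalFrom_of_append, hst]
      have h1 : word N N' ∈ M.accepts := (hM _).mpr (hin N N' (by omega) (by omega))
      exact hout N (by omega) ((hM _).mp (hacc.mpr h1))
    obtain ⟨n, n', hne, hst⟩ := Finite.exists_ne_map_eq_of_infinite
      (fun n : ℕ => M.evalFrom M.start (W (List.replicate (k + 1 + n) a)))
    rcases Nat.lt_or_ge n n' with h | h
    · exact main n n' h hst
    · exact main n' n (by omega) hst.symm
  · rintro ⟨Mo, finMo, monMo, φ, hφ⟩
    have main : ∀ n n' : ℕ, n < n' →
        φ (cls (W (List.replicate (k + 1 + n) a))) =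
          φ (cls (W (List.replicate (k + 1 + n') a))) → False := by
      intro n n' hlt hst
      set N := k + 1 + n
      set N' := k + 1 + n'
      have hφeq : φ (cls (word N N)) = φ (cls (word N N')) := by
        rw [hsplit N N, hsplit N N', ← cls_mul, ← cls_mul (W (List.replicate N' a)),
          map_mul, map_mul, hst]
      obtain ⟨x, y, z, hy, hq⟩ := hin N N' (by omega) (by omega)
      have hmem : cls (word N N') ∈
          { q : QAct A | ∃ x y z : List A, y.length = k ∧ q = cls (R x ++ shuffle y ++ W z) } :=
        ⟨x, y, z, hy, Quotient.sound hq⟩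
      have hmem2 : cls (word N N) ∈
          { q : QAct A | ∃ x y z : List A, y.length = k ∧ q = cls (R x ++ shuffle y ++ W z) } := by
        rw [← hφ]
        exact ⟨cls (word N N'), hmem, hφeq.symm⟩
      obtain ⟨x', y', z', hy', heq⟩ := hmem2
      exact hout N (by omega) ⟨x', y', z', hy', Quotient.exact heq⟩
    obtain ⟨n, n', hne, hst⟩ := Finite.exists_ne_map_eq_of_infinite
      (fun n : ℕ => φ (cls (W (List.replicate (k + 1 + n) a))))
    rcases Nat.lt_or_ge n n' with h | h
    · exact main n n' h hst
    · exact main n' n (by omega) hst.symm
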